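/- Let ω be a real random variable with cumulative distribution function F, fix y ∈ ℝ and a threshold c ∈ ℝ, and let s⁰ = 1 if y + ω ≤ c and s⁰ = 0 otherwise. Let p, q ∈ [0,1] with p + q = 1, and let s ∈ {0,1} be a random variable such that, conditionally on ω, ℙ(s = 0 | s⁰ = 1) = p, ℙ(s = 1 | s⁰ = 1) = 1 − p, ℙ(s = 1 | s⁰ = 0) = q, ℙ(s = 0 | s⁰ = 0) = 1 − q. Then ℙ(s = 1) = q, independently of y, c and F; hence the distribution of the tampered observation carries no information about y. -/
import Mathlib


open MeasureTheory

/-- when p + q = 1, the tampered observation carries no information. -/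
theorem stmt_8 {Ω' : Type*} [MeasurableSpace Ω'] (μ : Measure Ω') [IsProbabilityMeasure μ]
    (ω : Ω' → ℝ) (hω : Measurable ω)
    (F : ℝ → ℝ) (hF : ∀ t, (μ {a | ω a ≤ t}).toReal = F t)
    (y c : ℝ)
    (s0 : Ω' → ℝ) (hs0 : ∀ a, s0 a = if y + ω a ≤ c then 1 else 0)
    (p q : ℝ) (hp : p ∈ Set.Icc (0 : ℝ) 1) (hq : q ∈ Set.Icc (0 : ℝ) 1)
    (hpq : p + q = 1)
    (s : Ω' → ℝ) (hs : Measurable s) (hsval : ∀ a, s a = 0 ∨ s a = 1)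
    (hchan10 : (μ {a | s a = 0 ∧ s0 a = 1}).toReal = p * (μ {a | s0 a = 1}).toReal)
    (hchan11 : (μ {a | s a = 1 ∧ s0 a = 1}).toReal = (1 - p) * (μ {a | s0 a = 1}).toReal)
    (hchan01 : (μ {a | s a = 1 ∧ s0 a = 0}).toReal = q * (μ {a | s0 a = 0}).toReal)
    (hchan00 : (μ {a | s a = 0 ∧ s0 a = 0}).toReal = (1 - q) * (μ {a | s0 a = 0}).toReal) :
    (μ {a | s a = 1}).toReal = q := by
  set A : Set Ω' := {a | y + ω a ≤ c} with hA
  have hAm : MeasurableSet A := measurableSet_le (hω.const_add y) measurable_const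
  have h1 : {a | s0 a = 1} = A := by
    ext a
    simp only [Set.mem_setOf_eq, hs0 a, hA]
    split <;> simp_all
  have h0 : {a | s0 a = 0} = Aᶜ := by
    ext a
    simp only [Set.mem_setOf_eq, Set.mem_compl_iff, hs0 a, hA]
    split <;> simp_all
  have hunion : {a | s a = 1} = {a | s a = 1 ∧ s0 a = 1} ∪ {a | s a = 1 ∧ s0 a = 0} := by
    ext a
    simp only [Set.mem_setOf_eq, Set.mem_union]
    constructor
    · intro h
      rcases (by rw [hs0 a]; split <;> simp : s0 a = 1 ∨ s0 a = 0) with h' | h'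
      · exact Or.inl ⟨h, h'⟩
      · exact Or.inr ⟨h, h'⟩
    · rintro (⟨h, _⟩ | ⟨h, _⟩) <;> exact h
  have hdisj : Disjoint {a | s a = 1 ∧ s0 a = 1} {a | s a = 1 ∧ s0 a = 0} := by
    rw [Set.disjoint_left]
    rintro a ⟨_, h1'⟩ ⟨_, h0'⟩
    rw [h1'] at h0'
    norm_num at h0'
  have hm1 : MeasurableSet {a | s a = 1 ∧ s0 a = 1} := by
    have : {a | s a = 1 ∧ s0 a = 1} = s ⁻¹' {1} ∩ A := by
      ext a; simp [Set.mem_setOf_eq, ← h1]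
    rw [this]; exact (hs (measurableSet_singleton 1)).inter hAm
  have hm0 : MeasurableSet {a | s a = 1 ∧ s0 a = 0} := by
    have : {a | s a = 1 ∧ s0 a = 0} = s ⁻¹' {1} ∩ Aᶜ := by
      ext a; simp [Set.mem_setOf_eq, ← h0]
    rw [this]; exact (hs (measurableSet_singleton 1)).inter hAm.compl
  have hadd : μ {a | s a = 1} = μ {a | s a = 1 ∧ s0 a = 1} + μ {a | s a = 1 ∧ s0 a = 0} := by
    rw [hunion, measure_union hdisj hm0]
  have hfin1 : μ {a | s a = 1 ∧ s0 a = 1} ≠ ⊤ := measure_ne_top μ _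
  have hfin0 : μ {a | s a = 1 ∧ s0 a = 0} ≠ ⊤ := measure_ne_top μ _
  have hsum : (μ {a | s0 a = 1}).toReal + (μ {a | s0 a = 0}).toReal = 1 := by
    rw [h1, h0]
    have := prob_compl_eq_one_sub (μ := μ) hAm
    have hAfin : μ A ≠ ⊤ := measure_ne_top μ _
    rw [this, ENNReal.toReal_sub_of_le (prob_le_one) ENNReal.one_ne_top]
    simp
  calc (μ {a | s a = 1}).toReal
      = (μ {a | s a = 1 ∧ s0 a = 1}).toReal + (μ {a | s a = 1 ∧ s0 a = 0}).toReal := by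
        rw [hadd, ENNReal.toReal_add hfin1 hfin0]
    _ = (1 - p) * (μ {a | s0 a = 1}).toReal + q * (μ {a | s0 a = 0}).toReal := by
        rw [hchan11, hchan01]
    _ = q := by
        have : (1 : ℝ) - p = q := by linarith
        rw [this, ← mul_add, hsum, mul_one]
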